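/- For strictly increasing positive integer lists l=(l_1,...,l_m) (m ≥ 0) and q=(q_1,...,q_n) (n ≥ 1), the polynomial P_{l,q}(x) defined by (1.3), (1.1) and (5.1) satisfies P_{l,q}(q_n - l_m - n + m - 1) = (1/2)·P_{l,q^{(n)}}(q_n - l_m - n + m - 1), where q^{(n)} is q with its last entry removed and l_m is interpreted as 0 if m = 0. -/

import Mathlib

/-- The rising factorial `(a)_j = a(a+1)···(a+j-1)`. -/
noncomputable def rfac {K : Type*} [Field K] (a : K) (j : ℕ) : K :=
  ∏ i ∈ Finset.range j, (a + i)

/-- The product `(x+2)(x+3)^2···(x+n-1)^2(x+n)`, whose bases grow by one from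
factor to factor while the exponents increase by one up to the middle and then
decrease by one (empty for `n ≤ 1`). -/
noncomputable def tentInt {K : Type*} [Field K] (x : K) (n : ℕ) : K :=
  ∏ j ∈ Finset.Icc 2 n, (x + j) ^ (min (j - 1) (n + 1 - j))

/-- The product `(x+3/2)(x+5/2)^2···(x+(2n-1)/2)^2(x+(2n+1)/2)`, bases growing by
one, exponents rising by one to the middle and then falling (empty for `n = 0`). -/
noncomputable def tentHalf {K : Type*} [Field K] (x : K) (n : ℕ) : K :=
  ∏ j ∈ Finset.Icc 1 n, (x + j + 1 / 2) ^ (min j (n + 1 - j))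

/-- The product `(x+1)(x+2)^2···(x+m-1)^2(x+m)`, bases growing by one, exponents
rising by one to the middle and then falling (empty for `m = 0`). -/
noncomputable def tentIntBar {K : Type*} [Field K] (x : K) (m : ℕ) : K :=
  ∏ j ∈ Finset.Icc 1 m, (x + j) ^ (min j (m + 1 - j))

/-- The product `(x+3/2)(x+5/2)^2···(x+(2m-3)/2)^2(x+(2m-1)/2)`, bases growing by
one, exponents rising by one to the middle and then falling (empty for `m ≤ 1`). -/
noncomputable def tentHalfBar {K : Type*} [Field K] (x : K) (m : ℕ) : K :=
  ∏ j ∈ Finset.Icc 1 (m - 1), (x + j + 1 / 2) ^ (min j (m - j))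

/-- The polynomial `B_{m,n}(x)` of formula (1.1). -/
noncomputable def Bpoly {K : Type*} [Field K] (m n : ℕ) (x : K) : K :=
  ((2 : K) ^ (m * n + m * (m - 1) / 2))⁻¹ *
    rfac (x + n + 1) m * rfac (x + n + 2) m *
    tentInt x n * tentHalf x n *
    (∏ i ∈ Finset.Icc 1 n, rfac (x + i) m / rfac (x + i + 1 / 2) m) *
    (∏ i ∈ Finset.Icc 1 m, rfac (2 * x + n + i + 2) (n + i - 1))

/-- The polynomial `B̄_{m,n}(x)` of formula (1.2). -/
noncomputable def Bbar {K : Type*} [Field K] (m n : ℕ) (x : K) : K :=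
  ((2 : K) ^ (m * n + n * (n + 1) / 2))⁻¹ *
    rfac (x + m + 1) n *
    tentIntBar x m * tentHalfBar x m *
    (∏ i ∈ Finset.Icc 1 m, rfac (x + i) n / rfac (x + i + 1 / 2) n) *
    (∏ i ∈ Finset.Icc 1 n, rfac (2 * x + m + i + 1) (m + i))

/-- The constant `c_{l,q}` of formula (1.3):
`c_{l,q} = 2^{C(n-m,2)-m} ∏_{i=1}^m 1/(2l_i)! ∏_{i=1}^n 1/(2q_i-1)!
  · ∏_{i<j}(l_j-l_i) ∏_{i<j}(q_j-q_i) / ∏_{i,j}(l_i+q_j)`,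
where `C(a,2) = a(a-1)/2` for any integer `a`. -/
noncomputable def cConst (l q : ℕ → ℕ) (m n : ℕ) : ℚ :=
  (2 : ℚ) ^ ((((n : ℤ) - m) * ((n : ℤ) - m - 1)) / 2 - m) *
    (∏ i ∈ Finset.Icc 1 m, ((Nat.factorial (2 * l i) : ℚ))⁻¹) *
    (∏ i ∈ Finset.Icc 1 n, ((Nat.factorial (2 * q i - 1) : ℚ))⁻¹) *
    ((∏ i ∈ Finset.Icc 1 m, ∏ j ∈ Finset.Icc (i + 1) m, ((l j : ℚ) - l i)) *
      (∏ i ∈ Finset.Icc 1 n, ∏ j ∈ Finset.Icc (i + 1) n, ((q j : ℚ) - q i))) /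
    (∏ i ∈ Finset.Icc 1 m, ∏ j ∈ Finset.Icc 1 n, ((l i : ℚ) + q j))

/-- The polynomial `P_{l,q}(x)` in the form of formula (5.1):
`P_{l,q}(x) = c_{l,q} · B_{m,n}(x+l_m-m)
  · ∏_{i=1}^m ∏_{j=i}^{l_i-1} (x+l_m-j)(x+l_m-m+n+j+2)
  · ∏_{i=1}^n ∏_{j=i}^{q_i-1} (x+l_m-m+n-j+1)(x+l_m+j+1)`. -/
noncomputable def Ppoly (l q : ℕ → ℕ) (m n : ℕ) (x : ℚ) : ℚ :=
  cConst l q m n * Bpoly m n (x + l m - m) *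
    (∏ i ∈ Finset.Icc 1 m, ∏ j ∈ Finset.Icc i (l i - 1),
      (x + l m - j) * (x + l m - m + n + j + 2)) *
    (∏ i ∈ Finset.Icc 1 n, ∏ j ∈ Finset.Icc i (q i - 1),
      (x + l m - m + n - j + 1) * (x + l m + j + 1))


open Finset

lemma rfac_zero (a : ℚ) : rfac a 0 = 1 := by simp [rfac]

lemma rfac_succ (a : ℚ) (k : ℕ) : rfac a (k+1) = rfac a k * (a + k) := by
  simp [rfac, Finset.prod_range_succ]

lemma rfac_succ' (a : ℚ) (k : ℕ) : rfac a (k+1) = a * rfac (a+1) k := by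
  rw [rfac, Finset.prod_range_succ', mul_comm]
  simp only [Nat.cast_zero, add_zero]
  congr 1
  apply Finset.prod_congr rfl; intro i _; push_cast; ring

-- rfac in terms of Icc products
lemma rfac_Icc (c : ℚ) (b : ℕ) : rfac (c+1) b = ∏ i ∈ Icc 1 b, (c + i) := by
  induction b with
  | zero => simp [rfac]
  | succ b ih =>
    rw [rfac_succ, ih, Finset.prod_Icc_succ_top (by omega)]
    push_cast; ring

-- factorial building lemma
lemma fac_prod (a b : ℕ) :
    ((a.factorial : ℚ)) * ∏ k ∈ Icc 1 b, ((a : ℚ) + k) = ((a + b).factorial : ℚ) := by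
  induction b with
  | zero => simp
  | succ b ih =>
    rw [Finset.prod_Icc_succ_top (by omega), ← mul_assoc, ih]
    have : a + (b+1) = (a + b) + 1 := by ring
    rw [this, Nat.factorial_succ]
    push_cast; ring

lemma prod_rev (f : ℕ → ℚ) (b : ℕ) :
    ∏ i ∈ Icc 1 b, f i = ∏ i ∈ Icc 1 b, f (b + 1 - i) := by
  apply Finset.prod_nbij' (fun i => b + 1 - i) (fun i => b + 1 - i)
  · intro a ha; simp only [mem_Icc] at *; omega
  · intro a ha; simp only [mem_Icc] at *; omega
  · intro a ha; simp only [mem_Icc] at *; omega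
  · intro a ha; simp only [mem_Icc] at *; omega
  · intro a ha; simp only [mem_Icc] at ha; congr 1; omega

lemma prod_shift (f : ℕ → ℚ) (s t : ℕ) :
    ∏ j ∈ Icc (s+1) t, f j = ∏ j ∈ Icc 1 (t - s), f (j + s) := by
  apply Finset.prod_nbij' (fun j => j - s) (fun j => j + s)
  · intro a ha; simp only [mem_Icc] at *; omega
  · intro a ha; simp only [mem_Icc] at *; omega
  · intro a ha; simp only [mem_Icc] at *; omega
  · intro a ha; simp only [mem_Icc] at *; omega
  · intro a ha; simp only [mem_Icc] at ha; congr 1; omega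

-- telescoping (increasing)
lemma telescope_up (a : ℚ) : ∀ (s i : ℕ), i ≤ s + 1 →
    (a + i) * ∏ j ∈ Icc i s, (a + j + 1) = (a + s + 1) * ∏ j ∈ Icc i s, (a + j) := by
  intro s
  induction s with
  | zero =>
    intro i hi
    interval_cases i
    · simp [Finset.Icc_self]; ring
    · rw [Finset.Icc_eq_empty (by omega)]; simp
  | succ s ih =>
    intro i hi
    rcases Nat.lt_or_ge i (s+2) with h | h
    · have h1 : i ≤ s + 1 := by omega
      rw [Finset.prod_Icc_succ_top h1, Finset.prod_Icc_succ_top h1, ← mul_assoc, ih i h1]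
      push_cast; ring
    · have h2 : i = s + 2 := by omega
      subst h2
      rw [Finset.Icc_eq_empty (by omega)]
      simp; push_cast; ring

-- telescoping (decreasing)
lemma telescope_down (b : ℚ) : ∀ (s i : ℕ), i ≤ s + 1 →
    (b - (s+1)) * ∏ j ∈ Icc i s, (b - j) = (b - i) * ∏ j ∈ Icc i s, (b - j - 1) := by
  intro s
  induction s with
  | zero =>
    intro i hi
    interval_cases i
    · simp [Finset.Icc_self]; ring
    · rw [Finset.Icc_eq_empty (by omega)]; simp
  | succ s ih =>
    intro i hi
    rcases Nat.lt_or_ge i (s+2) with h | h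
    · have h1 : i ≤ s + 1 := by omega
      rw [Finset.prod_Icc_succ_top h1, Finset.prod_Icc_succ_top h1]
      have h2 := ih i h1
      push_cast at h2 ⊢
      linear_combination (b - s - 2) * h2
    · have h2 : i = s + 2 := by omega
      subst h2
      rw [Finset.Icc_eq_empty (by omega)]
      simp; push_cast; ring

-- pairing lemma
lemma prod_pair (c : ℚ) (m : ℕ) :
    ∏ i ∈ Icc 1 m, ((c + (2*i) - 1) * (c + 2*i)) = ∏ k ∈ Icc 1 (2*m), (c + k) := by
  induction m with
  | zero => simp
  | succ m ih =>
    rw [Finset.prod_Icc_succ_top (by omega), ih]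
    have h1 : 2*(m+1) = (2*m+1)+1 := by ring
    rw [h1, Finset.prod_Icc_succ_top (by omega), Finset.prod_Icc_succ_top (by omega)]
    push_cast; ring

lemma ind_step (g : ℕ → ℚ) (lo b t : ℕ) (hlo : b ≤ lo) :
    ∏ j ∈ Icc lo t, g j = ∏ j ∈ Icc b t, (g j) ^ (if lo ≤ j then 1 else 0) := by
  have hsub : Icc lo t ⊆ Icc b t := Finset.Icc_subset_Icc_left hlo
  calc ∏ j ∈ Icc lo t, g j = ∏ j ∈ Icc lo t, (g j) ^ (if lo ≤ j then 1 else 0) := by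
        apply Finset.prod_congr rfl
        intro x hx; simp only [mem_Icc] at hx
        rw [if_pos hx.1, pow_one]
    _ = ∏ j ∈ Icc b t, (g j) ^ (if lo ≤ j then 1 else 0) := by
        apply Finset.prod_subset hsub
        intro x hx hnx; simp only [mem_Icc] at hx hnx
        have : ¬ lo ≤ x := by omega
        rw [if_neg this, pow_zero]

lemma tentInt_step (y : ℚ) (n : ℕ) :
    tentInt y (n+1) = tentInt y n * ∏ j ∈ Icc ((n+4)/2) (n+1), (y + j) := by
  unfold tentInt
  have hsub : Icc 2 n ⊆ Icc 2 (n+1) := Finset.Icc_subset_Icc_right (by omega)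
  rw [Finset.prod_subset hsub (f := fun (j : ℕ) => (y + (j:ℚ)) ^ (min (j-1) (n+1-j)))
      (by intro x hx hnx; simp only [mem_Icc] at *
          have : x = n + 1 := by omega
          subst this
          have : min (n+1-1) (n+1-(n+1)) = 0 := by omega
          rw [this, pow_zero])]
  rw [ind_step (fun (j:ℕ) => (y + (j:ℚ))) ((n+4)/2) 2 (n+1) (by omega)]
  rw [← Finset.prod_mul_distrib]
  apply Finset.prod_congr rfl
  intro j hj; simp only [mem_Icc] at hj
  rw [← pow_add]
  congr 1
  split_ifs with h <;> omega

lemma tentHalf_step (y : ℚ) (n : ℕ) :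
    tentHalf y (n+1) = tentHalf y n * ∏ j ∈ Icc ((n+3)/2) (n+1), (y + j + 1/2) := by
  unfold tentHalf
  have hsub : Icc 1 n ⊆ Icc 1 (n+1) := Finset.Icc_subset_Icc_right (by omega)
  rw [Finset.prod_subset hsub (f := fun (j : ℕ) => (y + (j:ℚ) + 1/2) ^ (min j (n+1-j)))
      (by intro x hx hnx; simp only [mem_Icc] at *
          have : x = n + 1 := by omega
          subst this
          have : min (n+1) (n+1-(n+1)) = 0 := by omega
          rw [this, pow_zero])]
  rw [ind_step (fun (j:ℕ) => (y + (j:ℚ) + 1/2)) ((n+3)/2) 1 (n+1) (by omega)]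
  rw [← Finset.prod_mul_distrib]
  apply Finset.prod_congr rfl
  intro j hj; simp only [mem_Icc] at hj
  rw [← pow_add]
  congr 1
  split_ifs with h <;> omega

lemma tents_merge (y : ℚ) (n : ℕ) :
    (2:ℚ)^(n+1) * ((∏ j ∈ Icc ((n+4)/2) (n+1), (y + j)) * (∏ j ∈ Icc ((n+3)/2) (n+1), (y + j + 1/2))) =
    ∏ k ∈ Icc 1 (n+1), (2*y + n + 2 + k) := by
  rw [← Finset.prod_filter_mul_prod_filter_not (Icc 1 (n+1)) (fun k => (n+k) % 2 = 0)]
  have hA : ∏ j ∈ Icc ((n+4)/2) (n+1), (2*(y + (j:ℚ))) =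
      ∏ k ∈ (Icc 1 (n+1)).filter (fun k => (n+k) % 2 = 0), (2*y + (n:ℚ) + 2 + (k:ℚ)) := by
    apply Finset.prod_nbij' (fun j => 2*j - (n+2)) (fun k => (n+k+2)/2)
    · intro a ha; simp only [mem_Icc, mem_filter] at *; omega
    · intro a ha; simp only [mem_Icc, mem_filter] at *; omega
    · intro a ha; simp only [mem_Icc] at ha; omega
    · intro a ha; simp only [mem_Icc, mem_filter] at ha; omega
    · intro a ha; simp only [mem_Icc] at ha
      have hc : ((2*a - (n+2) : ℕ) : ℚ) = 2*(a:ℚ) - (n+2) := by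
        have : n + 2 ≤ 2*a := by omega
        push_cast [this]
        ring
      rw [hc]
      ring
  have hB : ∏ j ∈ Icc ((n+3)/2) (n+1), (2*(y + (j:ℚ) + 1/2)) =
      ∏ k ∈ (Icc 1 (n+1)).filter (fun k => ¬ (n+k) % 2 = 0), (2*y + (n:ℚ) + 2 + (k:ℚ)) := by
    apply Finset.prod_nbij' (fun j => 2*j - (n+1)) (fun k => (n+k+1)/2)
    · intro a ha; simp only [mem_Icc, mem_filter] at *; omega
    · intro a ha; simp only [mem_Icc, mem_filter] at *; omega
    · intro a ha; simp only [mem_Icc] at ha; omega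
    · intro a ha; simp only [mem_Icc, mem_filter] at ha; omega
    · intro a ha; simp only [mem_Icc] at ha
      have hc : ((2*a - (n+1) : ℕ) : ℚ) = 2*(a:ℚ) - (n+1) := by
        have : n + 1 ≤ 2*a := by omega
        push_cast [this]
        ring
      rw [hc]
      ring
  rw [← hA, ← hB]
  rw [Finset.prod_mul_distrib (f := fun (_:ℕ) => (2:ℚ)), Finset.prod_mul_distrib (f := fun (_:ℕ) => (2:ℚ))]
  rw [Finset.prod_const, Finset.prod_const, Nat.card_Icc, Nat.card_Icc]
  have hcard : (n + 1 + 1 - (n+4)/2) + (n + 1 + 1 - (n+3)/2) = n + 1 := by omega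
  rw [show ((2:ℚ)^(n+1) = 2^(n + 1 + 1 - (n+4)/2) * 2^(n + 1 + 1 - (n+3)/2)) from by
    rw [← pow_add, hcard]]
  ring

lemma tents_total (y : ℚ) (n : ℕ) :
    (2:ℚ)^(n+1) * (tentInt y (n+1) * tentHalf y (n+1)) =
    tentInt y n * tentHalf y n * ∏ k ∈ Icc 1 (n+1), (2*y + n + 2 + k) := by
  rw [tentInt_step, tentHalf_step]
  linear_combination (tentInt y n * tentHalf y n) * tents_merge y n

-- half-integers are nonzero
lemma half_ne_zero (z : ℤ) : ((z:ℚ) + 1/2) ≠ 0 := by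
  intro h
  have : (2*z + 1 : ℚ) = 0 := by linear_combination 2*h
  have h2 : ((2*z + 1 : ℤ) : ℚ) = 0 := by push_cast; linear_combination this
  have := (Int.cast_eq_zero (α := ℚ)).mp h2
  omega

lemma rfac_half_ne_zero (z : ℤ) (k : ℕ) : rfac ((z:ℚ) + 1/2) k ≠ 0 := by
  rw [rfac]
  apply Finset.prod_ne_zero_iff.mpr
  intro i _
  have : (z:ℚ) + 1/2 + i = ((z + i : ℤ) : ℚ) + 1/2 := by push_cast; ring
  rw [this]
  exact half_ne_zero _

/-- The key transfer identity for `Bpoly`. -/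
lemma Btrans (m n : ℕ) (y : ℚ)
    (hhalf : rfac (y + ((n+1:ℕ):ℚ) + 1/2) m ≠ 0) :
    Bpoly m (n+1) y * rfac (y + ((n+1:ℕ):ℚ) + 1/2) m
        * (∏ i ∈ Finset.Icc 1 m, (2*y + (n:ℚ) + i + 2)) * 2^(m + (n+1)) =
    Bpoly m n y * rfac (y + ((n+1:ℕ):ℚ) + 2) m
        * (∏ k ∈ Finset.Icc 1 (n+1), (2*y + (n:ℚ) + 2 + k))
        * (∏ i ∈ Finset.Icc 1 m, ((2*y + 2*(n:ℚ) + 2*i + 1) * (2*y + 2*n + 2*i + 2))) := by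
  unfold Bpoly
  rw [Finset.prod_Icc_succ_top (f := fun i => rfac (y + (i:ℚ)) m / rfac (y + (i:ℚ) + 1/2) m)
    (by omega)]
  have e1 : rfac (y + ((n+1:ℕ):ℚ) + 1) m = rfac (y + (n:ℚ) + 2) m := by
    congr 1; push_cast; ring
  have e2 : rfac (y + ((n+1:ℕ):ℚ)) m = rfac (y + (n:ℚ) + 1) m := by
    congr 1; push_cast; ring
  rw [e1]
  have hpowinv : ((2:ℚ) ^ (m * (n+1) + m * (m-1) / 2))⁻¹ * 2^m
      = ((2:ℚ) ^ (m * n + m * (m-1) / 2))⁻¹ := by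
    rw [show m * (n+1) + m * (m-1) / 2 = (m * n + m * (m-1) / 2) + m from by
      rw [Nat.mul_add, Nat.mul_one]; omega]
    rw [pow_add, mul_inv]
    field_simp
  have hcancel : (rfac (y + ((n+1:ℕ):ℚ)) m / rfac (y + ((n+1:ℕ):ℚ) + 1/2) m)
      * rfac (y + ((n+1:ℕ):ℚ) + 1/2) m = rfac (y + (n:ℚ) + 1) m := by
    rw [div_mul_cancel₀ _ hhalf, e2]
  have hbig : (∏ i ∈ Finset.Icc 1 m, rfac (2*y + ((n+1:ℕ):ℚ) + i + 2) ((n+1) + i - 1))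
      * (∏ i ∈ Finset.Icc 1 m, (2*y + (n:ℚ) + i + 2)) =
      (∏ i ∈ Finset.Icc 1 m, rfac (2*y + (n:ℚ) + i + 2) (n + i - 1))
      * (∏ i ∈ Finset.Icc 1 m, ((2*y + 2*(n:ℚ) + 2*i + 1) * (2*y + 2*n + 2*i + 2))) := by
    rw [← Finset.prod_mul_distrib, ← Finset.prod_mul_distrib]
    apply Finset.prod_congr rfl
    intro i hi
    simp only [Finset.mem_Icc] at hi
    have hexp : (n+1) + i - 1 = (n + i - 1) + 1 := by omega
    have hexp2 : n + i - 1 + 1 + 1 = (n + i - 1) + 2 := by omega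
    have ha : 2*y + ((n+1:ℕ):ℚ) + i + 2 = (2*y + (n:ℚ) + i + 2) + 1 := by push_cast; ring
    rw [hexp, ha, mul_comm (rfac ((2*y + (n:ℚ) + i + 2) + 1) ((n + i - 1)+1)) (2*y + (n:ℚ) + i + 2),
      ← rfac_succ', rfac_succ, rfac_succ]
    have hk : ((n + i - 1 : ℕ) : ℚ) = (n:ℚ) + i - 1 := by
      have h1 : 1 ≤ n + i := by omega
      push_cast [h1]
      ring
    rw [show n + i - 1 + 1 = n + i from by omega, hk]
    push_cast
    ring
  have htents := tents_total y n
  have H : (((2:ℚ) ^ (m * (n+1) + m * (m-1) / 2))⁻¹ * 2^m)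
        * ((rfac (y + ((n+1:ℕ):ℚ)) m / rfac (y + ((n+1:ℕ):ℚ) + 1/2) m)
            * rfac (y + ((n+1:ℕ):ℚ) + 1/2) m)
        * ((2:ℚ)^(n+1) * (tentInt y (n+1) * tentHalf y (n+1)))
        * ((∏ i ∈ Finset.Icc 1 m, rfac (2*y + ((n+1:ℕ):ℚ) + i + 2) ((n+1) + i - 1))
            * (∏ i ∈ Finset.Icc 1 m, (2*y + (n:ℚ) + i + 2)))
      = ((2:ℚ) ^ (m * n + m * (m-1) / 2))⁻¹
        * rfac (y + (n:ℚ) + 1) m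
        * (tentInt y n * tentHalf y n * ∏ k ∈ Finset.Icc 1 (n+1), (2*y + (n:ℚ) + 2 + k))
        * ((∏ i ∈ Finset.Icc 1 m, rfac (2*y + (n:ℚ) + i + 2) (n + i - 1))
            * (∏ i ∈ Finset.Icc 1 m, ((2*y + 2*(n:ℚ) + 2*i + 1) * (2*y + 2*n + 2*i + 2)))) := by
    rw [hpowinv, hcancel, htents, hbig]
  have hsplit2 : (2:ℚ)^(m + (n+1)) = 2^m * 2^(n+1) := by rw [pow_add]
  rw [hsplit2]
  -- the Bpoly-argument casts inside products: the big rfac product argument  shapes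
  linear_combination ((∏ i ∈ Finset.Icc 1 n, rfac (y + (i:ℚ)) m / rfac (y + (i:ℚ) + 1/2) m)
      * rfac (y + ((n+1:ℕ):ℚ) + 2) m * rfac (y + (n:ℚ) + 2) m) * H
lemma fact_ne (k : ℕ) : ((k.factorial : ℚ)) ≠ 0 := by
  exact_mod_cast k.factorial_ne_zero

lemma dup (m Q : ℕ) (hQ : 1 ≤ Q) :
    (((Q-1).factorial : ℚ)) * ((2*Q+2*m-2).factorial : ℚ)
      = 2^(2*m) * rfac ((Q:ℚ) - 1/2) m * ((Q+m-1).factorial : ℚ) * ((2*Q-2).factorial : ℚ) := by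
  induction m with
  | zero =>
    simp only [Nat.mul_zero, Nat.add_zero, Nat.zero_add, pow_zero, rfac_zero, one_mul, mul_one]
  | succ m ih =>
    have h1 : 2*Q+2*(m+1)-2 = (2*Q+2*m-2)+1+1 := by omega
    have h2 : Q+(m+1)-1 = (Q+m-1)+1 := by omega
    rw [h1, h2, Nat.factorial_succ, Nat.factorial_succ, Nat.factorial_succ, rfac_succ]
    have e1 : ((2*Q+2*m-2 : ℕ):ℚ) = 2*(Q:ℚ)+2*m-2 := by
      have h : 2 ≤ 2*Q+2*m := by omega
      push_cast [h]; ring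
    have e2 : ((Q+m-1 : ℕ):ℚ) = (Q:ℚ)+m-1 := by
      have h : 1 ≤ Q+m := by omega
      push_cast [h]; ring
    push_cast [e1, e2]
    linear_combination ((2*(Q:ℚ)+2*m-1) * (2*(Q:ℚ)+2*m)) * ih

lemma E1_eval (n Q : ℕ) (hQ : n + 1 ≤ Q) :
    ∏ j ∈ Icc (n+1) (Q-1), ((Q:ℚ) - j) = ((Q-n-1).factorial : ℚ) := by
  rw [prod_shift (fun j => (Q:ℚ) - j) n (Q-1), prod_rev]
  have hb : ∀ j ∈ Icc 1 (Q-1-n), (Q:ℚ) - ((Q-1-n+1-j+n : ℕ):ℚ) = (((0:ℕ)):ℚ) + j := by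
    intro j hj; simp only [mem_Icc] at hj
    rw [show (Q-1-n+1-j+n : ℕ) = Q - j from by omega]
    have h2 : ((Q - j : ℕ):ℚ) = (Q:ℚ) - j := by
      have : j ≤ Q := by omega
      push_cast [this]; ring
    rw [h2]; push_cast; ring
  rw [Finset.prod_congr rfl hb, show Q-1-n = Q-n-1 from by omega]
  have h := fac_prod 0 (Q-n-1)
  simp only [Nat.factorial_zero, Nat.cast_one, one_mul, Nat.zero_add] at h
  rw [h]

lemma f2_eval (n Q : ℕ) (hQ : n + 1 ≤ Q) :
    ((Q-n-1).factorial : ℚ) * ∏ i ∈ Icc 1 n, ((Q:ℚ) - i) = ((Q-1).factorial : ℚ) := by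
  rw [prod_rev]
  have hb : ∀ i ∈ Icc 1 n, (Q:ℚ) - ((n+1-i : ℕ):ℚ) = ((Q-n-1 : ℕ):ℚ) + i := by
    intro i hi; simp only [mem_Icc] at hi
    push_cast [show i ≤ n + 1 from by omega, show n ≤ Q from by omega,
      show 1 ≤ Q - n from by omega]
    ring
  rw [Finset.prod_congr rfl hb, fac_prod (Q-n-1) n,
    show Q-n-1+n = Q-1 from by omega]

lemma scalar_main (m n Q : ℕ) (hQ : n + 1 ≤ Q) :
    (2:ℚ)^((n:ℤ) - (m:ℤ)) * (((2*Q - 1).factorial : ℚ))⁻¹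
      * rfac ((Q:ℚ)+1) m
      * (∏ k ∈ Icc 1 (n+1), (2*(Q:ℚ) - n - 2 + k))
      * (∏ i ∈ Icc 1 m, ((2*(Q:ℚ) - 2 + 2*i - 1) * (2*(Q:ℚ) - 2 + 2*i)))
      * (∏ i ∈ Icc 1 n, ((Q:ℚ) - i))
      * (∏ j ∈ Icc (n+1) (Q-1), (((Q:ℚ) - j) * ((Q:ℚ) - n - 1 + m + j)))
    = (1/2) * (∏ i ∈ Icc 1 m, ((Q:ℚ) + i)) * rfac ((Q:ℚ) - 1/2) m
      * (∏ i ∈ Icc 1 m, (2*(Q:ℚ) - n - 2 + i)) * 2^(m + (n+1)) := by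
  -- convert everything into factorial quotients
  have f1 : ((2*Q-n-2).factorial : ℚ) * (∏ k ∈ Icc 1 (n+1), (2*(Q:ℚ) - n - 2 + k))
      = ((2*Q-1).factorial : ℚ) := by
    have hb : ∀ k ∈ Icc 1 (n+1), (2*(Q:ℚ) - n - 2 + k) = ((2*Q-n-2 : ℕ):ℚ) + k := by
      intro k hk
      push_cast [show n ≤ 2*Q from by omega, show 2 ≤ 2*Q - n from by omega]; ring
    rw [Finset.prod_congr rfl hb, fac_prod (2*Q-n-2) (n+1),
      show 2*Q-n-2+(n+1) = 2*Q-1 from by omega]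
  have f4 : ((2*Q-n-2).factorial : ℚ) * (∏ i ∈ Icc 1 m, (2*(Q:ℚ) - n - 2 + i))
      = ((2*Q+m-n-2).factorial : ℚ) := by
    have hb : ∀ k ∈ Icc 1 m, (2*(Q:ℚ) - n - 2 + k) = ((2*Q-n-2 : ℕ):ℚ) + k := by
      intro k hk
      push_cast [show n ≤ 2*Q from by omega, show 2 ≤ 2*Q - n from by omega]; ring
    rw [Finset.prod_congr rfl hb, fac_prod (2*Q-n-2) m,
      show 2*Q-n-2+m = 2*Q+m-n-2 from by omega]
  have f7 : ((2*Q-2).factorial : ℚ) * (∏ i ∈ Icc 1 m, ((2*(Q:ℚ) - 2 + 2*i - 1) * (2*(Q:ℚ) - 2 + 2*i)))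
      = ((2*Q+2*m-2).factorial : ℚ) := by
    rw [prod_pair (2*(Q:ℚ) - 2) m]
    have hb : ∀ k ∈ Icc 1 (2*m), (2*(Q:ℚ) - 2 + k) = ((2*Q-2 : ℕ):ℚ) + k := by
      intro k hk
      push_cast [show 2 ≤ 2*Q from by omega]; ring
    rw [Finset.prod_congr rfl hb, fac_prod (2*Q-2) (2*m),
      show 2*Q-2+2*m = 2*Q+2*m-2 from by omega]
  have f3b : ((Q+m-1).factorial : ℚ) * (∏ j ∈ Icc (n+1) (Q-1), ((Q:ℚ) - n - 1 + m + j))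
      = ((2*Q+m-n-2).factorial : ℚ) := by
    rw [prod_shift (fun j => (Q:ℚ) - n - 1 + m + j) n (Q-1)]
    have hb : ∀ j ∈ Icc 1 (Q-1-n), (Q:ℚ) - n - 1 + m + ((j + n : ℕ):ℚ) = ((Q+m-1 : ℕ):ℚ) + j := by
      intro j hj
      push_cast [show 1 ≤ Q + m from by omega]; ring
    rw [Finset.prod_congr rfl hb, fac_prod (Q+m-1) (Q-1-n),
      show Q+m-1+(Q-1-n) = 2*Q+m-n-2 from by omega]
  have hsplitE : (∏ j ∈ Icc (n+1) (Q-1), (((Q:ℚ) - j) * ((Q:ℚ) - n - 1 + m + j)))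
      = (∏ j ∈ Icc (n+1) (Q-1), ((Q:ℚ) - j)) * (∏ j ∈ Icc (n+1) (Q-1), ((Q:ℚ) - n - 1 + m + j)) :=
    Finset.prod_mul_distrib
  have hE1 := E1_eval n Q hQ
  have hf2 := f2_eval n Q hQ
  have hdup := dup m Q (by omega)
  have hzpow : (2:ℚ)^((n:ℤ) - (m:ℤ)) = 2^n / 2^m := by
    rw [zpow_sub₀ (two_ne_zero), zpow_natCast, zpow_natCast]
  have hrfacQ : rfac ((Q:ℚ)+1) m = ∏ i ∈ Icc 1 m, ((Q:ℚ) + i) := rfac_Icc (Q:ℚ) m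
  have hpow2 : (2:ℚ)^(m + (n+1)) = 2^m * (2^n * 2) := by rw [pow_add, pow_succ]
  -- now pure bookkeeping
  rw [hsplitE, hE1, hzpow, hrfacQ, hpow2]
  -- express the remaining products as factorial quotients
  have g1 : (∏ k ∈ Icc 1 (n+1), (2*(Q:ℚ) - n - 2 + k))
      = ((2*Q-1).factorial : ℚ) / ((2*Q-n-2).factorial : ℚ) := by
    rw [eq_div_iff (fact_ne _)]; linear_combination f1
  have g4 : (∏ i ∈ Icc 1 m, (2*(Q:ℚ) - n - 2 + i))
      = ((2*Q+m-n-2).factorial : ℚ) / ((2*Q-n-2).factorial : ℚ) := by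
    rw [eq_div_iff (fact_ne _)]; linear_combination f4
  have g7 : (∏ i ∈ Icc 1 m, ((2*(Q:ℚ) - 2 + 2*i - 1) * (2*(Q:ℚ) - 2 + 2*i)))
      = ((2*Q+2*m-2).factorial : ℚ) / ((2*Q-2).factorial : ℚ) := by
    rw [eq_div_iff (fact_ne _)]; linear_combination f7
  have g3b : (∏ j ∈ Icc (n+1) (Q-1), ((Q:ℚ) - n - 1 + m + j))
      = ((2*Q+m-n-2).factorial : ℚ) / ((Q+m-1).factorial : ℚ) := by
    rw [eq_div_iff (fact_ne _)]; linear_combination f3b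
  have g2 : (∏ i ∈ Icc 1 n, ((Q:ℚ) - i))
      = ((Q-1).factorial : ℚ) / ((Q-n-1).factorial : ℚ) := by
    rw [eq_div_iff (fact_ne _)]; linear_combination hf2
  have gdup : ((2*Q+2*m-2).factorial : ℚ)
      = 2^(2*m) * rfac ((Q:ℚ) - 1/2) m * ((Q+m-1).factorial : ℚ) * ((2*Q-2).factorial : ℚ)
        / ((Q-1).factorial : ℚ) := by
    rw [eq_div_iff (fact_ne _)]; linear_combination hdup
  rw [g1, g4, g7, g3b, g2, gdup]
  field_simp
  ring
/-- First equality of Lemma 5.3: for strictly increasing positive lists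
`l = (l_1,...,l_m)` (`m ≥ 0`, `l_m` read as `0` when `m = 0`) and
`q = (q_1,...,q_n)` (`n ≥ 1`),
`P_{l,q}(q_n - l_m - n + m - 1) = (1/2)·P_{l,q^{(n)}}(q_n - l_m - n + m - 1)`. -/
theorem Ppoly_boundary_q (m n : ℕ) (l q : ℕ → ℕ) (hn : 1 ≤ n) (hl0 : l 0 = 0)
    (hlpos : ∀ i, 1 ≤ i → i ≤ m → 1 ≤ l i)
    (hlmono : ∀ i, 1 ≤ i → i < m → l i < l (i + 1))
    (hqpos : ∀ i, 1 ≤ i → i ≤ n → 1 ≤ q i)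
    (hqmono : ∀ i, 1 ≤ i → i < n → q i < q (i + 1)) :
    Ppoly l q m n ((q n : ℚ) - l m - n + m - 1) =
      (1 / 2) * Ppoly l q m (n - 1) ((q n : ℚ) - l m - n + m - 1) := by
  obtain ⟨n', rfl⟩ : ∃ n', n = n' + 1 := ⟨n - 1, by omega⟩
  simp only [Nat.add_sub_cancel]
  -- monotonicity facts
  have hq_ge : ∀ i, i ≤ n'+1 → 1 ≤ i → i ≤ q i := by
    intro i
    induction i with
    | zero => omega
    | succ k ih =>
      intro hle h1
      rcases Nat.eq_zero_or_pos k with rfl | hk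
      · exact hqpos 1 le_rfl (by omega)
      · have h2 := hqmono k (by omega) (by omega)
        have h3 := ih (by omega) (by omega)
        omega
  have hq_chain : ∀ j, j ≤ n'+1 → ∀ i, 1 ≤ i → i < j → q i < q j := by
    intro j
    induction j with
    | zero => omega
    | succ k ih =>
      intro hle i hi1 hij
      rcases Nat.lt_or_ge i k with h | h
      · have h2 := ih (by omega) i hi1 h
        have h3 := hqmono k (by omega) (by omega)
        omega
      · have : i = k := by omega
        subst this
        exact hqmono i (by omega) (by omega)
  have hl_ge : ∀ i, i ≤ m → 1 ≤ i → i ≤ l i := by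
    intro i
    induction i with
    | zero => omega
    | succ k ih =>
      intro hle h1
      rcases Nat.eq_zero_or_pos k with rfl | hk
      · exact hlpos 1 le_rfl (by omega)
      · have h2 := hlmono k (by omega) (by omega)
        have h3 := ih (by omega) (by omega)
        omega
  have hQn : n'+1 ≤ q (n'+1) := hq_ge (n'+1) le_rfl (by omega)
  unfold Ppoly
  set X : ℚ := (q (n'+1) : ℚ) - (l m : ℚ) - ((n'+1 : ℕ) : ℚ) + (m : ℚ) - 1 with hX
  set Y : ℚ := X + (l m : ℚ) - (m : ℚ) with hY
  -- canonical products
  set P1q : ℚ := ∏ i ∈ Finset.Icc 1 m, ((q (n'+1) : ℚ) + i) with hP1q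
  set P2q : ℚ := ∏ i ∈ Finset.Icc 1 m, ((l i : ℚ) + (q (n'+1) : ℚ)) with hP2q
  set P3q : ℚ := ∏ i ∈ Finset.Icc 1 n', ((q (n'+1) : ℚ) - (q i : ℚ)) with hP3q
  set P4q : ℚ := ∏ i ∈ Finset.Icc 1 n', ((q (n'+1) : ℚ) - (i : ℚ)) with hP4q
  set GQ : ℚ := ∏ i ∈ Finset.Icc 1 m, (2*(q (n'+1) : ℚ) - (n' : ℚ) - 2 + i) with hGQ
  set DQ : ℚ := ∏ k ∈ Finset.Icc 1 (n'+1), (2*(q (n'+1) : ℚ) - (n' : ℚ) - 2 + k) with hDQ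
  set WQ : ℚ := ∏ i ∈ Finset.Icc 1 m,
      ((2*(q (n'+1) : ℚ) - 2 + 2*(i:ℚ) - 1) * (2*(q (n'+1) : ℚ) - 2 + 2*(i:ℚ))) with hWQ
  set EQ : ℚ := ∏ j ∈ Finset.Icc (n'+1) (q (n'+1) - 1),
      (((q (n'+1) : ℚ) - (j:ℚ)) * ((q (n'+1) : ℚ) - (n':ℚ) - 1 + (m:ℚ) + (j:ℚ))) with hEQ
  set RFh : ℚ := rfac ((q (n'+1) : ℚ) - 1/2) m with hRFh
  set RF1 : ℚ := rfac ((q (n'+1) : ℚ) + 1) m with hRF1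
  -- nonzeroness
  have hQcast : ((n':ℚ) + 1) ≤ (q (n'+1) : ℚ) := by exact_mod_cast hQn
  have hP1ne : P1q ≠ 0 := by
    rw [hP1q]
    refine Finset.prod_ne_zero_iff.mpr ?_
    intro i hi
    simp only [Finset.mem_Icc] at hi
    have h1 : (1:ℚ) ≤ (i:ℚ) := by exact_mod_cast hi.1
    have h2 : (0:ℚ) ≤ (q (n'+1) : ℚ) := Nat.cast_nonneg _
    intro hz; linarith [hz]
  have hP3ne : P3q ≠ 0 := by
    rw [hP3q]
    refine Finset.prod_ne_zero_iff.mpr ?_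
    intro i hi
    simp only [Finset.mem_Icc] at hi
    have h1 : q i < q (n'+1) := hq_chain (n'+1) le_rfl i hi.1 (by omega)
    have h2 : (q i : ℚ) < (q (n'+1) : ℚ) := by exact_mod_cast h1
    intro hz; linarith [hz]
  have hGne : GQ ≠ 0 := by
    rw [hGQ]
    refine Finset.prod_ne_zero_iff.mpr ?_
    intro i hi
    simp only [Finset.mem_Icc] at hi
    have h1 : (1:ℚ) ≤ (i:ℚ) := by exact_mod_cast hi.1
    intro hz; linarith [hz]
  have hRFhne : RFh ≠ 0 := by
    rw [hRFh, show (q (n'+1) : ℚ) - 1/2 = (((q (n'+1) : ℤ) - 1 : ℤ):ℚ) + 1/2 from by push_cast; ring]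
    exact rfac_half_ne_zero _ m
  have hpowne : ((2:ℚ)^(m + (n'+1))) ≠ 0 := pow_ne_zero _ two_ne_zero
  have hMne : P1q * P3q * RFh * GQ * (2:ℚ)^(m + (n'+1)) ≠ 0 := by
    exact mul_ne_zero (mul_ne_zero (mul_ne_zero (mul_ne_zero hP1ne hP3ne) hRFhne) hGne) hpowne
  refine mul_right_cancel₀ hMne ?_
  -- transfer for B
  have hhalfY : rfac (Y + ((n'+1:ℕ):ℚ) + 1/2) m ≠ 0 := by
    rw [show Y + ((n'+1:ℕ):ℚ) + 1/2 = (((q (n'+1) : ℤ) - 1 : ℤ):ℚ) + 1/2 from by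
      rw [hY, hX]; push_cast; ring]
    exact rfac_half_ne_zero _ m
  have hB : Bpoly m (n'+1) Y * RFh * GQ * (2:ℚ)^(m + (n'+1))
      = Bpoly m n' Y * RF1 * DQ * WQ := by
    have h := Btrans m n' Y hhalfY
    have c1 : rfac (Y + ((n'+1:ℕ):ℚ) + 1/2) m = RFh := by
      rw [hRFh]; congr 1; rw [hY, hX]; push_cast; ring
    have c2 : rfac (Y + ((n'+1:ℕ):ℚ) + 2) m = RF1 := by
      rw [hRF1]; congr 1; rw [hY, hX]; push_cast; ring
    have c3 : (∏ i ∈ Finset.Icc 1 m, (2*Y + (n':ℚ) + (i:ℚ) + 2)) = GQ := by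
      rw [hGQ]
      refine Finset.prod_congr rfl ?_
      intro i _
      rw [hY, hX]; push_cast; ring
    have c4 : (∏ k ∈ Finset.Icc 1 (n'+1), (2*Y + (n':ℚ) + 2 + (k:ℚ))) = DQ := by
      rw [hDQ]
      refine Finset.prod_congr rfl ?_
      intro k _
      rw [hY, hX]; push_cast; ring
    have c5 : (∏ i ∈ Finset.Icc 1 m, ((2*Y + 2*(n':ℚ) + 2*(i:ℚ) + 1) * (2*Y + 2*(n':ℚ) + 2*(i:ℚ) + 2))) = WQ := by
      rw [hWQ]
      refine Finset.prod_congr rfl ?_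
      intro i _
      rw [hY, hX]; push_cast; ring
    rw [c1, c2, c3, c4, c5] at h
    exact h
  -- transfer for the l-product
  have hA : (∏ i ∈ Finset.Icc 1 m, ∏ j ∈ Finset.Icc i (l i - 1),
        (X + (l m : ℚ) - (j:ℚ)) * (X + (l m : ℚ) - (m:ℚ) + ((n'+1:ℕ):ℚ) + (j:ℚ) + 2)) * P1q
      = (∏ i ∈ Finset.Icc 1 m, ∏ j ∈ Finset.Icc i (l i - 1),
        (X + (l m : ℚ) - (j:ℚ)) * (X + (l m : ℚ) - (m:ℚ) + (n':ℚ) + (j:ℚ) + 2)) * P2q := by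
    rw [hP1q, hP2q, ← Finset.prod_mul_distrib, ← Finset.prod_mul_distrib]
    refine Finset.prod_congr rfl ?_
    intro i hi
    simp only [Finset.mem_Icc] at hi
    rw [Finset.prod_mul_distrib, Finset.prod_mul_distrib]
    have e1 : ∀ j ∈ Finset.Icc i (l i - 1),
        (X + (l m : ℚ) - (m:ℚ) + ((n'+1:ℕ):ℚ) + (j:ℚ) + 2) = (q (n'+1) : ℚ) + (j:ℚ) + 1 := by
      intro j _; rw [hX]; push_cast; ring
    have e0 : ∀ j ∈ Finset.Icc i (l i - 1),
        (X + (l m : ℚ) - (m:ℚ) + (n':ℚ) + (j:ℚ) + 2) = (q (n'+1) : ℚ) + (j:ℚ) := by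
      intro j _; rw [hX]; push_cast; ring
    rw [Finset.prod_congr rfl e1, Finset.prod_congr rfl e0]
    have hil : i ≤ l i := hl_ge i hi.2 hi.1
    have t := telescope_up ((q (n'+1)):ℚ) (l i - 1) i (by omega)
    have hli : ((l i - 1 : ℕ) : ℚ) = (l i : ℚ) - 1 := by
      have : 1 ≤ l i := by omega
      push_cast [this]; ring
    rw [hli] at t
    linear_combination (∏ j ∈ Finset.Icc i (l i - 1), (X + (l m : ℚ) - (j:ℚ))) * t
  -- transfer for the q-product
  have hC : (∏ i ∈ Finset.Icc 1 (n'+1), ∏ j ∈ Finset.Icc i (q i - 1),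
        (X + (l m : ℚ) - (m:ℚ) + ((n'+1:ℕ):ℚ) - (j:ℚ) + 1) * (X + (l m : ℚ) + (j:ℚ) + 1)) * P3q
      = (∏ i ∈ Finset.Icc 1 n', ∏ j ∈ Finset.Icc i (q i - 1),
        (X + (l m : ℚ) - (m:ℚ) + (n':ℚ) - (j:ℚ) + 1) * (X + (l m : ℚ) + (j:ℚ) + 1)) * P4q * EQ := by
    rw [Finset.prod_Icc_succ_top (show 1 ≤ n'+1 by omega)]
    have hTop : (∏ j ∈ Finset.Icc (n'+1) (q (n'+1) - 1),
        (X + (l m : ℚ) - (m:ℚ) + ((n'+1:ℕ):ℚ) - (j:ℚ) + 1) * (X + (l m : ℚ) + (j:ℚ) + 1)) = EQ := by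
      rw [hEQ]
      refine Finset.prod_congr rfl ?_
      intro j _
      rw [hX]; push_cast; ring
    rw [hTop]
    have hMid : (∏ i ∈ Finset.Icc 1 n', ∏ j ∈ Finset.Icc i (q i - 1),
          (X + (l m : ℚ) - (m:ℚ) + ((n'+1:ℕ):ℚ) - (j:ℚ) + 1) * (X + (l m : ℚ) + (j:ℚ) + 1)) * P3q
        = (∏ i ∈ Finset.Icc 1 n', ∏ j ∈ Finset.Icc i (q i - 1),
          (X + (l m : ℚ) - (m:ℚ) + (n':ℚ) - (j:ℚ) + 1) * (X + (l m : ℚ) + (j:ℚ) + 1)) * P4q := by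
      rw [hP3q, hP4q, ← Finset.prod_mul_distrib, ← Finset.prod_mul_distrib]
      refine Finset.prod_congr rfl ?_
      intro i hi
      simp only [Finset.mem_Icc] at hi
      rw [Finset.prod_mul_distrib, Finset.prod_mul_distrib]
      have e1 : ∀ j ∈ Finset.Icc i (q i - 1),
          (X + (l m : ℚ) - (m:ℚ) + ((n'+1:ℕ):ℚ) - (j:ℚ) + 1) = (q (n'+1) : ℚ) - (j:ℚ) := by
        intro j _; rw [hX]; push_cast; ring
      have e0 : ∀ j ∈ Finset.Icc i (q i - 1),
          (X + (l m : ℚ) - (m:ℚ) + (n':ℚ) - (j:ℚ) + 1) = (q (n'+1) : ℚ) - (j:ℚ) - 1 := by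
        intro j _; rw [hX]; push_cast; ring
      rw [Finset.prod_congr rfl e1, Finset.prod_congr rfl e0]
      have hiq : i ≤ q i := hq_ge i (by omega) hi.1
      have t := telescope_down ((q (n'+1)):ℚ) (q i - 1) i (by omega)
      have hqi : ((q i - 1 : ℕ) : ℚ) = (q i : ℚ) - 1 := by
        have : 1 ≤ q i := by omega
        push_cast [this]; ring
      rw [hqi] at t
      linear_combination (∏ j ∈ Finset.Icc i (q i - 1), (X + (l m : ℚ) + (j:ℚ) + 1)) * t
    linear_combination EQ * hMid
  -- transfer for the constant
  have hP2ne : P2q ≠ 0 := by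
    rw [hP2q]
    refine Finset.prod_ne_zero_iff.mpr ?_
    intro i hi
    simp only [Finset.mem_Icc] at hi
    have h1 : (1:ℚ) ≤ (l i : ℚ) := by exact_mod_cast hlpos i hi.1 hi.2
    have h2 : (0:ℚ) ≤ (q (n'+1) : ℚ) := Nat.cast_nonneg _
    intro hz; linarith [hz]
  have hPine : (∏ i ∈ Finset.Icc 1 m, ∏ j ∈ Finset.Icc 1 n', ((l i : ℚ) + (q j : ℚ))) ≠ 0 := by
    refine Finset.prod_ne_zero_iff.mpr ?_
    intro i hi
    simp only [Finset.mem_Icc] at hi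
    refine Finset.prod_ne_zero_iff.mpr ?_
    intro j hj
    simp only [Finset.mem_Icc] at hj
    have h1 : (1:ℚ) ≤ (l i : ℚ) := by exact_mod_cast hlpos i hi.1 hi.2
    have h2 : (0:ℚ) ≤ (q j : ℚ) := Nat.cast_nonneg _
    intro hz; linarith [hz]
  have hcc : cConst l q m (n'+1) * P2q
      = cConst l q m n' * (2:ℚ)^((n':ℤ) - (m:ℤ))
        * ((Nat.factorial (2 * q (n'+1) - 1) : ℚ))⁻¹ * P3q := by
    unfold cConst
    have hzsplit : (2:ℚ)^(((((n'+1:ℕ):ℤ) - (m:ℤ)) * (((n'+1:ℕ):ℤ) - (m:ℤ) - 1)) / 2 - (m:ℤ))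
        = (2:ℚ)^((((n':ℤ) - (m:ℤ)) * (((n':ℤ)) - (m:ℤ) - 1)) / 2 - (m:ℤ)) * (2:ℚ)^((n':ℤ) - (m:ℤ)) := by
      rw [← zpow_add₀ (two_ne_zero)]
      congr 1
      obtain ⟨k, hk⟩ := Int.even_mul_succ_self ((n':ℤ) - (m:ℤ) - 1)
      have h1 : (((n'+1:ℕ):ℤ) - (m:ℤ)) = ((n':ℤ) - (m:ℤ) - 1) + 2 := by push_cast; ring
      rw [h1]
      have hp : (((n':ℤ) - (m:ℤ) - 1) + 2) * ((((n':ℤ) - (m:ℤ) - 1) + 2) - 1)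
          = ((n':ℤ) - (m:ℤ) - 1) * (((n':ℤ) - (m:ℤ) - 1) + 1) + 2*(((n':ℤ) - (m:ℤ) - 1) + 1) := by ring
      have hq2 : ((n':ℤ) - (m:ℤ)) * (((n':ℤ)) - (m:ℤ) - 1)
          = ((n':ℤ) - (m:ℤ) - 1) * (((n':ℤ) - (m:ℤ) - 1) + 1) := by ring
      omega
    have hFq : (∏ i ∈ Finset.Icc 1 (n'+1), ((Nat.factorial (2 * q i - 1) : ℚ))⁻¹)
        = (∏ i ∈ Finset.Icc 1 n', ((Nat.factorial (2 * q i - 1) : ℚ))⁻¹)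
          * ((Nat.factorial (2 * q (n'+1) - 1) : ℚ))⁻¹ :=
      Finset.prod_Icc_succ_top (by omega) _
    have hDq : (∏ i ∈ Finset.Icc 1 (n'+1), ∏ j ∈ Finset.Icc (i+1) (n'+1), ((q j : ℚ) - q i))
        = (∏ i ∈ Finset.Icc 1 n', ∏ j ∈ Finset.Icc (i+1) n', ((q j : ℚ) - q i)) * P3q := by
      rw [Finset.prod_Icc_succ_top (show 1 ≤ n'+1 by omega)]
      rw [show Finset.Icc (n'+1+1) (n'+1) = ∅ from Finset.Icc_eq_empty (by omega)]
      rw [Finset.prod_empty, mul_one, hP3q]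
      have hsplit : ∀ i ∈ Finset.Icc 1 n',
          (∏ j ∈ Finset.Icc (i+1) (n'+1), ((q j : ℚ) - q i))
          = (∏ j ∈ Finset.Icc (i+1) n', ((q j : ℚ) - q i)) * ((q (n'+1) : ℚ) - q i) := by
        intro i hi
        simp only [Finset.mem_Icc] at hi
        exact Finset.prod_Icc_succ_top (by omega) _
      rw [Finset.prod_congr rfl hsplit, Finset.prod_mul_distrib]
    have hPi : (∏ i ∈ Finset.Icc 1 m, ∏ j ∈ Finset.Icc 1 (n'+1), ((l i : ℚ) + q j))
        = (∏ i ∈ Finset.Icc 1 m, ∏ j ∈ Finset.Icc 1 n', ((l i : ℚ) + q j)) * P2q := by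
      rw [hP2q]
      have hsplit : ∀ i ∈ Finset.Icc 1 m,
          (∏ j ∈ Finset.Icc 1 (n'+1), ((l i : ℚ) + q j))
          = (∏ j ∈ Finset.Icc 1 n', ((l i : ℚ) + q j)) * ((l i : ℚ) + q (n'+1)) := by
        intro i _
        exact Finset.prod_Icc_succ_top (by omega) _
      rw [Finset.prod_congr rfl hsplit, Finset.prod_mul_distrib]
    rw [hzsplit, hFq, hDq, hPi]
    field_simp
  -- the scalar identity
  have hS := scalar_main m n' (q (n'+1)) hQn
  rw [← hP1q, ← hP4q, ← hGQ, ← hDQ, ← hWQ, ← hEQ, ← hRFh, ← hRF1] at hS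
  -- final assembly
  linear_combination
    (cConst l q m (n'+1)
      * (∏ i ∈ Finset.Icc 1 m, ∏ j ∈ Finset.Icc i (l i - 1),
          (X + (l m : ℚ) - (j:ℚ)) * (X + (l m : ℚ) - (m:ℚ) + ((n'+1:ℕ):ℚ) + (j:ℚ) + 2))
      * (∏ i ∈ Finset.Icc 1 (n'+1), ∏ j ∈ Finset.Icc i (q i - 1),
          (X + (l m : ℚ) - (m:ℚ) + ((n'+1:ℕ):ℚ) - (j:ℚ) + 1) * (X + (l m : ℚ) + (j:ℚ) + 1))
      * P1q * P3q) * hB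
    + (cConst l q m (n'+1)
      * (∏ i ∈ Finset.Icc 1 (n'+1), ∏ j ∈ Finset.Icc i (q i - 1),
          (X + (l m : ℚ) - (m:ℚ) + ((n'+1:ℕ):ℚ) - (j:ℚ) + 1) * (X + (l m : ℚ) + (j:ℚ) + 1))
      * P3q * Bpoly m n' Y * RF1 * DQ * WQ) * hA
    + (cConst l q m (n'+1)
      * (∏ i ∈ Finset.Icc 1 m, ∏ j ∈ Finset.Icc i (l i - 1),
          (X + (l m : ℚ) - (j:ℚ)) * (X + (l m : ℚ) - (m:ℚ) + (n':ℚ) + (j:ℚ) + 2))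
      * P2q * Bpoly m n' Y * RF1 * DQ * WQ) * hC
    + ((∏ i ∈ Finset.Icc 1 m, ∏ j ∈ Finset.Icc i (l i - 1),
          (X + (l m : ℚ) - (j:ℚ)) * (X + (l m : ℚ) - (m:ℚ) + (n':ℚ) + (j:ℚ) + 2))
      * Bpoly m n' Y * RF1 * DQ * WQ
      * (∏ i ∈ Finset.Icc 1 n', ∏ j ∈ Finset.Icc i (q i - 1),
          (X + (l m : ℚ) - (m:ℚ) + (n':ℚ) - (j:ℚ) + 1) * (X + (l m : ℚ) + (j:ℚ) + 1))
      * P4q * EQ) * hcc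
    + (cConst l q m n' * P3q
      * (∏ i ∈ Finset.Icc 1 m, ∏ j ∈ Finset.Icc i (l i - 1),
          (X + (l m : ℚ) - (j:ℚ)) * (X + (l m : ℚ) - (m:ℚ) + (n':ℚ) + (j:ℚ) + 2))
      * Bpoly m n' Y
      * (∏ i ∈ Finset.Icc 1 n', ∏ j ∈ Finset.Icc i (q i - 1),
          (X + (l m : ℚ) - (m:ℚ) + (n':ℚ) - (j:ℚ) + 1) * (X + (l m : ℚ) + (j:ℚ) + 1))) * hS
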